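/- Let φ : ℝ → ℝ be differentiable and suppose for each x, y ∈ ℝ there is a differentiable curve γ_{x,y} : [0,1] → ℝ with γ_{x,y}(0) = x, γ_{x,y}(1) = y such that t ↦ φ(γ_{x,y}(t)) is convex on [0,1] and η(y,x) := γ̇_{x,y}(0) is well-defined. Then φ is η-invex: φ(y) − φ(x) ≥ η(y,x)·φ'(x) for all x, y. -/

import Mathlib

theorem invex_of_convex_along_curves (φ : ℝ → ℝ)
    (γ : ℝ → ℝ → ℝ → ℝ) (η : ℝ → ℝ → ℝ)
    (hφ : Differentiable ℝ φ)
    (hγdiff : ∀ x y, Differentiable ℝ (γ x y))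
    (hγ0 : ∀ x y, γ x y 0 = x) (hγ1 : ∀ x y, γ x y 1 = y)
    (hconv : ∀ x y, ConvexOn ℝ (Set.Icc (0 : ℝ) 1) (fun t => φ (γ x y t)))
    (hη : ∀ x y, η y x = deriv (γ x y) 0) :
    ∀ x y, φ y - φ x ≥ η y x * deriv φ x := by
  intro x y
  have hg : HasDerivAt (fun t => φ (γ x y t)) (deriv φ x * deriv (γ x y) 0) 0 := by
    have h1 : HasDerivAt (γ x y) (deriv (γ x y) 0) 0 := ((hγdiff x y) 0).hasDerivAt
    have h2 : HasDerivAt φ (deriv φ (γ x y 0)) (γ x y 0) := (hφ _).hasDerivAt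
    simpa [hγ0 x y, Function.comp_def] using h2.comp 0 h1
  have key := (hconv x y).le_slope_of_hasDerivWithinAt_Ioi
    (Set.mem_Icc.mpr ⟨le_refl 0, zero_le_one⟩)
    (Set.mem_Icc.mpr ⟨zero_le_one, le_refl 1⟩)
    zero_lt_one (hg.hasDerivWithinAt)
  rw [slope_def_field] at key
  simp only [hγ0 x y, hγ1 x y] at key
  have : deriv φ x * deriv (γ x y) 0 ≤ φ y - φ x := by
    have := key
    field_simp at this
    linarith
  rw [hη x y]
  linarith [this]
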